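/- Let v₁, v₂ ∈ ℂ⁷ be vectors such that both 5-vectors v₁∧ω₀ and v₂∧ω₀ are decomposable in ⋀⁵ℂ⁷. Then v₁∧v₂∧ω₀ = 0 in ⋀⁶ℂ⁷. (Every secant line of the conic Q = { [v] : v∧ω₀ decomposable } is an element of the variety of ω₀-isotropic 2-planes Ĝ₂.) -/

import Mathlib

open ExteriorAlgebra

noncomputable section

/-- The standard basis 1-vectors `eᵢ` of `⋀¹ℂ⁷` (indexed from 0, so `e 0 = e₁`, …, `e 6 = e₇`). -/
def e (i : Fin 7) : ExteriorAlgebra ℂ (Fin 7 → ℂ) := ι ℂ (Pi.single i 1)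

/-- The degenerate 4-form
`ω₀ = e₁∧e₂∧e₃∧e₇ + e₄∧e₅∧e₆∧e₇ + e₂∧e₃∧e₅∧e₆ + e₁∧e₃∧e₄∧e₆`. -/
def ω₀ : ExteriorAlgebra ℂ (Fin 7 → ℂ) :=
  e 0 * e 1 * e 2 * e 6 + e 3 * e 4 * e 5 * e 6 + e 1 * e 2 * e 4 * e 5 + e 0 * e 2 * e 3 * e 5

/-- The wedge product of a tuple of vectors, as an element of the exterior algebra. -/
def wedge {n : ℕ} (w : Fin n → (Fin 7 → ℂ)) : ExteriorAlgebra ℂ (Fin 7 → ℂ) :=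
  (List.ofFn fun i => ι ℂ (w i)).prod

/-! ### Auxiliary machinery -/

lemma anticomm (x y : Fin 7 → ℂ) : ι ℂ x * ι ℂ y = -(ι ℂ y * ι ℂ x) := by
  have h := CliffordAlgebra.ι_mul_ι_add_swap (Q := (0 : QuadraticForm ℂ (Fin 7 → ℂ))) x y
  rw [eq_neg_iff_add_eq_zero, h]
  simp [QuadraticMap.polar]

lemma swap (x y : Fin 7 → ℂ) (b : ExteriorAlgebra ℂ (Fin 7 → ℂ)) :
    ι ℂ x * (ι ℂ y * b) = -(ι ℂ y * (ι ℂ x * b)) := by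
  rw [← mul_assoc, anticomm, ← mul_assoc]
  rw [neg_mul]

lemma sq0 (x : Fin 7 → ℂ) (b : ExteriorAlgebra ℂ (Fin 7 → ℂ)) :
    ι ℂ x * (ι ℂ x * b) = 0 := by
  rw [← mul_assoc, ι_sq_zero, zero_mul]

lemma wedge_eq (w : Fin 5 → (Fin 7 → ℂ)) :
    wedge w = ι ℂ (w 0) * (ι ℂ (w 1) * (ι ℂ (w 2) * (ι ℂ (w 3) * ι ℂ (w 4)))) := by
  simp [wedge, List.ofFn_succ, mul_assoc]

lemma mul_wedge (w : Fin 5 → (Fin 7 → ℂ)) (i : Fin 5) : ι ℂ (w i) * wedge w = 0 := by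
  rw [wedge_eq]
  fin_cases i
  · exact sq0 _ _
  · show ι ℂ (w 1) * (ι ℂ (w 0) * (ι ℂ (w 1) * (ι ℂ (w 2) * (ι ℂ (w 3) * ι ℂ (w 4))))) = 0
    rw [swap (w 1) (w 0), sq0, mul_zero, neg_zero]
  · show ι ℂ (w 2) * (ι ℂ (w 0) * (ι ℂ (w 1) * (ι ℂ (w 2) * (ι ℂ (w 3) * ι ℂ (w 4))))) = 0
    rw [swap (w 2) (w 0), swap (w 2) (w 1), sq0]; simp
  · show ι ℂ (w 3) * (ι ℂ (w 0) * (ι ℂ (w 1) * (ι ℂ (w 2) * (ι ℂ (w 3) * ι ℂ (w 4))))) = 0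
    rw [swap (w 3) (w 0), swap (w 3) (w 1), swap (w 3) (w 2), sq0]; simp
  · show ι ℂ (w 4) * (ι ℂ (w 0) * (ι ℂ (w 1) * (ι ℂ (w 2) * (ι ℂ (w 3) * ι ℂ (w 4))))) = 0
    rw [swap (w 4) (w 0), swap (w 4) (w 1), swap (w 4) (w 2), swap (w 4) (w 3),
      ι_sq_zero]; simp

local infixl:70 "⌋" => CliffordAlgebra.contractLeft

set_option maxHeartbeats 2000000 in
lemma key (w : Fin 5 → (Fin 7 → ℂ)) (d1 d2 d3 d4 : Module.Dual ℂ (Fin 7 → ℂ)) :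
    (d1⌋(d2⌋(d3⌋(d4⌋(wedge w))))) * wedge w = 0 := by
  have h0 := mul_wedge w 0
  have h1 := mul_wedge w 1
  have h2 := mul_wedge w 2
  have h3 := mul_wedge w 3
  have h4 := mul_wedge w 4
  rw [wedge_eq] at h0 h1 h2 h3 h4 ⊢
  simp only [CliffordAlgebra.contractLeft_ι_mul, CliffordAlgebra.contractLeft_ι,
    CliffordAlgebra.contractLeft_algebraMap, map_sub, map_smul, LinearMap.map_sub,
    LinearMap.map_smul, smul_sub, mul_sub, sub_mul, smul_mul_assoc, mul_smul_comm,
    mul_zero, zero_mul, smul_zero, sub_zero, zero_sub, neg_neg, neg_zero, mul_assoc]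
  simp only [Algebra.algebraMap_eq_smul_one, smul_mul_assoc, one_mul, smul_smul]
  simp only [h0, h1, h2, h3, h4, smul_zero, mul_zero, sub_zero, zero_sub, neg_zero, sub_self,
    neg_neg]
  simp only [mul_smul_comm, h0, h1, h2, h3, h4, smul_zero, mul_zero, sub_zero, zero_sub,
    neg_zero, sub_self, neg_neg]

def δ (i : Fin 7) : Module.Dual ℂ (Fin 7 → ℂ) := LinearMap.proj i

lemma cV (i : Fin 7) (v : Fin 7 → ℂ) (X : ExteriorAlgebra ℂ (Fin 7 → ℂ)) :
    (δ i)⌋(ι ℂ v * X) = v i • X - ι ℂ v * ((δ i)⌋X) := by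
  rw [CliffordAlgebra.contractLeft_ι_mul]; simp [δ]

lemma bV (i : Fin 7) (v : Fin 7 → ℂ) :
    (δ i)⌋(ι ℂ v) = algebraMap ℂ (ExteriorAlgebra ℂ (Fin 7 → ℂ)) (v i) := by
  rw [CliffordAlgebra.contractLeft_ι]; simp [δ]

lemma cE_eq (i : Fin 7) (X : ExteriorAlgebra ℂ (Fin 7 → ℂ)) :
    (δ i)⌋(e i * X) = X - e i * ((δ i)⌋X) := by
  rw [e, CliffordAlgebra.contractLeft_ι_mul]; simp [δ]

lemma cE_ne {i j : Fin 7} (h : i ≠ j) (X : ExteriorAlgebra ℂ (Fin 7 → ℂ)) :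
    (δ i)⌋(e j * X) = -(e j * ((δ i)⌋X)) := by
  rw [e, CliffordAlgebra.contractLeft_ι_mul]; simp [δ, Pi.single_apply, h.symm]

lemma bE_eq (i : Fin 7) : (δ i)⌋(e i) = 1 := by
  rw [e, CliffordAlgebra.contractLeft_ι]; simp [δ]

lemma bE_ne {i j : Fin 7} (h : i ≠ j) : (δ i)⌋(e j) = 0 := by
  rw [e, CliffordAlgebra.contractLeft_ι]; simp [δ, Pi.single_apply, h.symm]

set_option maxHeartbeats 4000000 in
lemma coord0 (v : Fin 7 → ℂ) (w : Fin 5 → (Fin 7 → ℂ)) (hw : ι ℂ v * ω₀ = wedge w) :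
    v 0 = 0 := by
  have E := key w (δ 0) (δ 1) (δ 4) (δ 5)
  rw [← hw] at E
  have E2 : (δ 0)⌋((δ 2)⌋((δ 3)⌋((δ 4)⌋((δ 5)⌋((δ 6)⌋((((δ 0)⌋((δ 1)⌋((δ 4)⌋((δ 5)⌋(ι ℂ v * ω₀))))) * (ι ℂ v * ω₀)))))))) = 0 := by
    rw [E]; simp
  simp only [ω₀, mul_add, add_mul, mul_assoc] at E2
  simp (disch := decide) only [cV, bV, cE_eq, cE_ne, bE_eq, bE_ne,
    map_add, map_sub, map_smul, LinearMap.map_sub, LinearMap.map_smul, LinearMap.map_add,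
    CliffordAlgebra.contractLeft_algebraMap, CliffordAlgebra.contractLeft_one,
    smul_sub, smul_add, mul_sub, sub_mul, smul_mul_assoc, mul_smul_comm, smul_smul,
    one_mul, mul_one, mul_zero, zero_mul, smul_zero, zero_smul,
    one_smul, sub_zero, zero_sub, add_zero, zero_add, neg_neg, neg_zero, map_zero,
    map_neg, LinearMap.map_neg, mul_neg, neg_mul, smul_neg, neg_smul, sub_neg_eq_add, neg_sub,
    neg_add, add_mul, mul_add, add_smul, neg_eq_zero,
    Algebra.mul_smul_comm, Algebra.smul_mul_assoc] at E2
  simp only [Algebra.smul_def, ← map_mul, mul_one, neg_eq_zero, algebraMap_eq_zero_iff,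
    mul_self_eq_zero] at E2
  exact E2

set_option maxHeartbeats 4000000 in
lemma coord1 (v : Fin 7 → ℂ) (w : Fin 5 → (Fin 7 → ℂ)) (hw : ι ℂ v * ω₀ = wedge w) :
    v 1 = 0 := by
  have E := key w (δ 0) (δ 1) (δ 3) (δ 5)
  rw [← hw] at E
  have E2 : (δ 1)⌋((δ 2)⌋((δ 3)⌋((δ 4)⌋((δ 5)⌋((δ 6)⌋((((δ 0)⌋((δ 1)⌋((δ 3)⌋((δ 5)⌋(ι ℂ v * ω₀))))) * (ι ℂ v * ω₀)))))))) = 0 := by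
    rw [E]; simp
  simp only [ω₀, mul_add, add_mul, mul_assoc] at E2
  simp (disch := decide) only [cV, bV, cE_eq, cE_ne, bE_eq, bE_ne,
    map_add, map_sub, map_smul, LinearMap.map_sub, LinearMap.map_smul, LinearMap.map_add,
    CliffordAlgebra.contractLeft_algebraMap, CliffordAlgebra.contractLeft_one,
    smul_sub, smul_add, mul_sub, sub_mul, smul_mul_assoc, mul_smul_comm, smul_smul,
    one_mul, mul_one, mul_zero, zero_mul, smul_zero, zero_smul,
    one_smul, sub_zero, zero_sub, add_zero, zero_add, neg_neg, neg_zero, map_zero,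
    map_neg, LinearMap.map_neg, mul_neg, neg_mul, smul_neg, neg_smul, sub_neg_eq_add, neg_sub,
    neg_add, add_mul, mul_add, add_smul, neg_eq_zero,
    Algebra.mul_smul_comm, Algebra.smul_mul_assoc] at E2
  simp only [Algebra.smul_def, ← map_mul, mul_one, neg_eq_zero, algebraMap_eq_zero_iff,
    mul_self_eq_zero] at E2
  exact E2

set_option maxHeartbeats 4000000 in
lemma coord3 (v : Fin 7 → ℂ) (w : Fin 5 → (Fin 7 → ℂ)) (hw : ι ℂ v * ω₀ = wedge w) :
    v 3 = 0 := by
  have E := key w (δ 0) (δ 1) (δ 2) (δ 3)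
  rw [← hw] at E
  have E2 : (δ 1)⌋((δ 2)⌋((δ 3)⌋((δ 4)⌋((δ 5)⌋((δ 6)⌋((((δ 0)⌋((δ 1)⌋((δ 2)⌋((δ 3)⌋(ι ℂ v * ω₀))))) * (ι ℂ v * ω₀)))))))) = 0 := by
    rw [E]; simp
  simp only [ω₀, mul_add, add_mul, mul_assoc] at E2
  simp (disch := decide) only [cV, bV, cE_eq, cE_ne, bE_eq, bE_ne,
    map_add, map_sub, map_smul, LinearMap.map_sub, LinearMap.map_smul, LinearMap.map_add,
    CliffordAlgebra.contractLeft_algebraMap, CliffordAlgebra.contractLeft_one,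
    smul_sub, smul_add, mul_sub, sub_mul, smul_mul_assoc, mul_smul_comm, smul_smul,
    one_mul, mul_one, mul_zero, zero_mul, smul_zero, zero_smul,
    one_smul, sub_zero, zero_sub, add_zero, zero_add, neg_neg, neg_zero, map_zero,
    map_neg, LinearMap.map_neg, mul_neg, neg_mul, smul_neg, neg_smul, sub_neg_eq_add, neg_sub,
    neg_add, add_mul, mul_add, add_smul, neg_eq_zero,
    Algebra.mul_smul_comm, Algebra.smul_mul_assoc] at E2
  simp only [Algebra.smul_def, ← map_mul, mul_one, neg_eq_zero, algebraMap_eq_zero_iff,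
    mul_self_eq_zero] at E2
  exact E2

set_option maxHeartbeats 4000000 in
lemma coord4 (v : Fin 7 → ℂ) (w : Fin 5 → (Fin 7 → ℂ)) (hw : ι ℂ v * ω₀ = wedge w) :
    v 4 = 0 := by
  have E := key w (δ 0) (δ 1) (δ 2) (δ 4)
  rw [← hw] at E
  have E2 : (δ 0)⌋((δ 2)⌋((δ 3)⌋((δ 4)⌋((δ 5)⌋((δ 6)⌋((((δ 0)⌋((δ 1)⌋((δ 2)⌋((δ 4)⌋(ι ℂ v * ω₀))))) * (ι ℂ v * ω₀)))))))) = 0 := by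
    rw [E]; simp
  simp only [ω₀, mul_add, add_mul, mul_assoc] at E2
  simp (disch := decide) only [cV, bV, cE_eq, cE_ne, bE_eq, bE_ne,
    map_add, map_sub, map_smul, LinearMap.map_sub, LinearMap.map_smul, LinearMap.map_add,
    CliffordAlgebra.contractLeft_algebraMap, CliffordAlgebra.contractLeft_one,
    smul_sub, smul_add, mul_sub, sub_mul, smul_mul_assoc, mul_smul_comm, smul_smul,
    one_mul, mul_one, mul_zero, zero_mul, smul_zero, zero_smul,
    one_smul, sub_zero, zero_sub, add_zero, zero_add, neg_neg, neg_zero, map_zero,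
    map_neg, LinearMap.map_neg, mul_neg, neg_mul, smul_neg, neg_smul, sub_neg_eq_add, neg_sub,
    neg_add, add_mul, mul_add, add_smul, neg_eq_zero,
    Algebra.mul_smul_comm, Algebra.smul_mul_assoc] at E2
  simp only [Algebra.smul_def, ← map_mul, mul_one, neg_eq_zero, algebraMap_eq_zero_iff,
    mul_self_eq_zero] at E2
  exact E2

lemma eDef (i : Fin 7) : ι ℂ (Pi.single i 1) = e i := rfl

lemma eswap {i j : Fin 7} (_h : j < i) (b : ExteriorAlgebra ℂ (Fin 7 → ℂ)) :
    e i * (e j * b) = -(e j * (e i * b)) := swap _ _ _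

lemma eswap' {i j : Fin 7} (_h : j < i) : e i * e j = -(e j * e i) := anticomm _ _

lemma esq (i : Fin 7) (b : ExteriorAlgebra ℂ (Fin 7 → ℂ)) : e i * (e i * b) = 0 := sq0 _ _

lemma esq' (i : Fin 7) : e i * e i = 0 := ι_sq_zero _

lemma rep (v : Fin 7 → ℂ) (h0 : v 0 = 0) (h1 : v 1 = 0) (h3 : v 3 = 0) (h4 : v 4 = 0) :
    v = v 2 • (Pi.single 2 1 : Fin 7 → ℂ) + v 5 • (Pi.single 5 1 : Fin 7 → ℂ) + v 6 • (Pi.single 6 1 : Fin 7 → ℂ) := by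
  funext j
  fin_cases j <;>
    simp [h0, h1, h3, h4, Pi.single_apply]

lemma coords (v : Fin 7 → ℂ) (h : ∃ w : Fin 5 → (Fin 7 → ℂ), ι ℂ v * ω₀ = wedge w) :
    v = v 2 • (Pi.single 2 1 : Fin 7 → ℂ) + v 5 • (Pi.single 5 1 : Fin 7 → ℂ) + v 6 • (Pi.single 6 1 : Fin 7 → ℂ) := by
  obtain ⟨w, hw⟩ := h
  exact rep v (coord0 v w hw) (coord1 v w hw) (coord3 v w hw) (coord4 v w hw)

set_option maxHeartbeats 1000000 in
lemma ezero (i j : Fin 7) (hi : i = 2 ∨ i = 5 ∨ i = 6) (hj : j = 2 ∨ j = 5 ∨ j = 6) :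
    e i * (e j * ω₀) = 0 := by
  rcases hi with rfl | rfl | rfl <;> rcases hj with rfl | rfl | rfl <;>
  simp (disch := decide) only [ω₀, mul_add, mul_assoc, eswap, eswap', esq, esq',
    mul_neg, neg_mul, mul_zero, zero_mul, neg_zero, add_zero, zero_add, neg_neg]

/-- If `v₁∧ω₀` and `v₂∧ω₀` are both decomposable 5-vectors, then `v₁∧v₂∧ω₀ = 0`:
every secant line of the conic `Q = { [v] : v∧ω₀ decomposable }` belongs to `Ĝ₂`. -/
theorem stmt_3 (v₁ v₂ : Fin 7 → ℂ)
    (h₁ : ∃ w : Fin 5 → (Fin 7 → ℂ), ι ℂ v₁ * ω₀ = wedge w)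
    (h₂ : ∃ w : Fin 5 → (Fin 7 → ℂ), ι ℂ v₂ * ω₀ = wedge w) :
    ι ℂ v₁ * ι ℂ v₂ * ω₀ = 0 := by
  rw [mul_assoc, coords v₁ h₁, coords v₂ h₂]
  simp only [map_add, map_smul, add_mul, mul_add, smul_mul_assoc, mul_smul_comm, smul_add,
    eDef]
  simp only [ezero 2 2 (Or.inl rfl) (Or.inl rfl),
    ezero 2 5 (Or.inl rfl) (Or.inr (Or.inl rfl)),
    ezero 2 6 (Or.inl rfl) (Or.inr (Or.inr rfl)),
    ezero 5 2 (Or.inr (Or.inl rfl)) (Or.inl rfl),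
    ezero 5 5 (Or.inr (Or.inl rfl)) (Or.inr (Or.inl rfl)),
    ezero 5 6 (Or.inr (Or.inl rfl)) (Or.inr (Or.inr rfl)),
    ezero 6 2 (Or.inr (Or.inr rfl)) (Or.inl rfl),
    ezero 6 5 (Or.inr (Or.inr rfl)) (Or.inr (Or.inl rfl)),
    ezero 6 6 (Or.inr (Or.inr rfl)) (Or.inr (Or.inr rfl)),
    smul_zero, add_zero, zero_add]

end
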